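/- Let f : ℝ₊ → ℝ satisfy f(x) > 0 for all x > 0 and the Beurling functional equation f(v + u·f(v)) = f(u)·f(v) for all u, v > 0, and suppose f(a) = 1 for some a > 0. Then the range set R_f := {f(x) : x > 0} is a subgroup of the multiplicative group of positive reals: 1 ∈ R_f, R_f is closed under multiplication, and for every w ∈ R_f also w⁻¹ ∈ R_f. -/

import Mathlib

theorem bfe_range_is_multiplicative_subgroup
    (f : ℝ → ℝ) (a : ℝ) (ha : 0 < a)
    (hpos : ∀ x : ℝ, 0 < x → 0 < f x)
    (hBFE : ∀ u v : ℝ, 0 < u → 0 < v → f (v + u * f v) = f u * f v)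
    (hfa : f a = 1) :
    (1 ∈ {w : ℝ | ∃ x : ℝ, 0 < x ∧ w = f x}) ∧
    (∀ w₁ ∈ {w : ℝ | ∃ x : ℝ, 0 < x ∧ w = f x},
      ∀ w₂ ∈ {w : ℝ | ∃ x : ℝ, 0 < x ∧ w = f x},
        w₁ * w₂ ∈ {w : ℝ | ∃ x : ℝ, 0 < x ∧ w = f x}) ∧
    (∀ w ∈ {w : ℝ | ∃ x : ℝ, 0 < x ∧ w = f x},
      w⁻¹ ∈ {w : ℝ | ∃ x : ℝ, 0 < x ∧ w = f x}) := by
  refine ⟨⟨a, ha, hfa.symm⟩, ?_, ?_⟩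
  · rintro w₁ ⟨u, hu, rfl⟩ w₂ ⟨v, hv, rfl⟩
    exact ⟨v + u * f v, add_pos hv (mul_pos hu (hpos v hv)), (hBFE u v hu hv).symm⟩
  · rintro w ⟨x, hx, rfl⟩
    have hper : ∀ u : ℝ, 0 < u → f (a + u) = f u := by
      intro u hu
      have h := hBFE u a hu ha
      rw [hfa, mul_one, mul_one] at h
      exact h
    have hna : ∀ n : ℕ, f ((n + 1 : ℕ) * a) = 1 := by
      intro n
      induction n with
      | zero => simpa using hfa
      | succ m ih =>
        have : ((m + 2 : ℕ) : ℝ) * a = a + ((m + 1 : ℕ) : ℝ) * a := by push_cast; ring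
        rw [this, hper _ (by positivity), ih]
    obtain ⟨n, hn⟩ := exists_nat_gt (x / a)
    have hxa : x < ((n + 1 : ℕ) : ℝ) * a := by
      have h1 : x < n * a := (div_lt_iff₀ ha).mp hn
      have h2 : (n : ℝ) * a ≤ ((n + 1 : ℕ) : ℝ) * a := by
        apply mul_le_mul_of_nonneg_right _ ha.le
        push_cast; linarith
      linarith
    have hfx := hpos x hx
    set y := (((n + 1 : ℕ) : ℝ) * a - x) / f x with hy
    have hy0 : 0 < y := div_pos (by linarith) hfx
    have hxy : x + y * f x = ((n + 1 : ℕ) : ℝ) * a := by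
      rw [hy, div_mul_cancel₀ _ hfx.ne']; ring
    have h := hBFE y x hy0 hx
    rw [hxy, hna n] at h
    exact ⟨y, hy0, (eq_inv_of_mul_eq_one_left h.symm).symm⟩
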